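/- For every natural number n, σ( u·fⁿ ) = (u + v)·fⁿ, where σ is the coefficient shift on (ZMod 2)⟦X⟧; moreover σ(v) = u, and for every n ≥ 1, σ( v·fⁿ ) = u·φ_{n-1}(f) + v·φ_n(f), where φ_0 = 0 and φ_m = ∑_{i=1}^{m} Yⁱ for m ≥ 1, and φ_m(f) denotes evaluation at f. -/

import Mathlib

open PowerSeries

noncomputable section

/-- The multiplier `f = (1+X+X²)·(1+X²)⁻¹` in `(ZMod 2)⟦X⟧`. -/
def f : PowerSeries (ZMod 2) := (1 + X + X ^ 2) * (1 + X ^ 2)⁻¹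

/-- `u = X·(1+X+X²)⁻¹`, the translation part of `x`. -/
def u : PowerSeries (ZMod 2) := X * (1 + X + X ^ 2)⁻¹

/-- `v = (1+X)·(1+X+X²)⁻¹`, the translation part of `z`. -/
def v : PowerSeries (ZMod 2) := (1 + X) * (1 + X + X ^ 2)⁻¹

/-- The coefficient shift `σ` on power series: `coeff n (σ g) = coeff (n+1) g`. -/
def shift (g : PowerSeries (ZMod 2)) : PowerSeries (ZMod 2) :=
  PowerSeries.mk fun n => coeff (n + 1) g

/-- `φ_0 = 0` and `φ_n = ∑_{i=1}^n Yⁱ` for `n ≥ 1`, in `(ZMod 2)[Y]`. -/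
def phi (n : ℕ) : Polynomial (ZMod 2) := ∑ i ∈ Finset.Icc 1 n, Polynomial.X ^ i

/-- For `q = ∑_{i=0}^n c_i Yⁱ` in `(ZMod 2)[Y]` (with `n` the degree of `q`),
`ψ_q = ∑_{i=1}^n c_i φ_{i-1}`. -/
def psi (q : Polynomial (ZMod 2)) : Polynomial (ZMod 2) :=
  ∑ i ∈ Finset.Icc 1 q.natDegree, Polynomial.C (q.coeff i) * phi (i - 1)

end

section Aux

open PowerSeries

lemma ps_add_self (g : PowerSeries (ZMod 2)) : g + g = 0 := by
  ext n
  simp [CharTwo.add_self_eq_zero]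

lemma hp : ((1 + X + X ^ 2 : PowerSeries (ZMod 2))) * (1 + X + X ^ 2)⁻¹ = 1 :=
  PowerSeries.mul_inv_cancel _ (by simp)

lemma hq : ((1 + X ^ 2 : PowerSeries (ZMod 2))) * (1 + X ^ 2)⁻¹ = 1 :=
  PowerSeries.mul_inv_cancel _ (by simp)

lemma shift_CX (c : ZMod 2) (h : PowerSeries (ZMod 2)) :
    shift (C c + X * h) = h := by
  ext n
  simp [shift, PowerSeries.coeff_succ_X_mul, PowerSeries.coeff_C]

lemma h1 : u = X * (u + v) := by
  unfold u v
  linear_combination - ps_add_self (X ^ 2 * (1 + X + X ^ 2)⁻¹)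

lemma h2v : v = C 1 + X * u := by
  unfold u v
  rw [map_one]
  linear_combination hp - ps_add_self (X ^ 2 * (1 + X + X ^ 2)⁻¹)

lemma hf : f = 1 + u * f := by
  unfold f u
  linear_combination (-(X * (1 + X ^ 2)⁻¹)) * hp + hq

lemma hvf : (1 + X) * v * f = 1 := by
  unfold v f
  linear_combination ((1 + X) ^ 2 * (1 + X ^ 2)⁻¹) * hp + hq
    + ps_add_self (X * (1 + X ^ 2)⁻¹)

lemma phi_succ (m : ℕ) : phi (m + 1) = phi m + Polynomial.X ^ (m + 1) := by
  rw [phi, phi, Finset.sum_Icc_succ_top (Nat.le_add_left 1 m)]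

lemma main_pow (m : ℕ) : f ^ m = 1 + u * Polynomial.aeval f (phi m) := by
  induction m with
  | zero => simp [phi]
  | succ m ih =>
    rw [phi_succ, map_add, map_pow, Polynomial.aeval_X, pow_succ]
    linear_combination ih + (f ^ m) * hf

end Aux

/-- Section formulas for `x^{aⁿ}` and `z^{aⁿ}` in power-series form:
`σ(u·fⁿ) = (u+v)·fⁿ` for all `n`, `σ(v) = u`, and
`σ(v·fⁿ) = u·φ_{n-1}(f) + v·φ_n(f)` for all `n ≥ 1`. -/
theorem shift_powers :
    (∀ n : ℕ, shift (u * f ^ n) = (u + v) * f ^ n) ∧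
    shift v = u ∧
    (∀ n : ℕ, 1 ≤ n →
      shift (v * f ^ n) =
        u * Polynomial.aeval f (phi (n - 1)) + v * Polynomial.aeval f (phi n)) := by
  refine ⟨fun n => ?_, ?_, fun n hn => ?_⟩
  · have h : u * f ^ n = C 0 + X * ((u + v) * f ^ n) := by
      rw [map_zero, zero_add, ← mul_assoc, ← h1]
    rw [h, shift_CX]
  · rw [h2v, shift_CX]
  · obtain ⟨m, rfl⟩ : ∃ m, n = m + 1 := ⟨n - 1, (Nat.succ_pred_eq_of_pos hn).symm⟩
    simp only [Nat.add_sub_cancel]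
    have h : v * f ^ (m + 1) = C 1 +
        X * (u * Polynomial.aeval f (phi m) + v * Polynomial.aeval f (phi (m + 1))) := by
      rw [map_one, phi_succ, map_add, map_pow, Polynomial.aeval_X]
      linear_combination (f ^ m) * hvf + main_pow m + (Polynomial.aeval f (phi m)) * h1
        - ps_add_self (X * v * f ^ (m + 1))
    rw [h, shift_CX]
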